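/- arXiv:2404.10547 — 2 statements merged into one kernel-verified Lean document; each statement's English description precedes it below -/
import Mathlib

section
/- Consider n units with true neighborhoods N_i and assumed neighborhoods M_i satisfying N_i ⊆ M_i. Suppose outcomes follow the linear model Y_i(z) = c_i + Σ_{j∈N_i} c_{ij}·1[z_j = 1], and treatments z_1,...,z_n are mutually independent Bernoulli(p) with 0 < p < 1. Then the estimator τ̂_Lin = (1/n) Σ_i Y_i(z) · Σ_{j∈M_i} ( z_j/p − (1−z_j)/(1−p) ) satisfies E[τ̂_Lin] = (1/n) Σ_i Σ_{j∈N_i} c_{ij}, the global average treatment effect τ(1⃗, 0⃗). -/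
open MeasureTheory ProbabilityTheory Finset

theorem stmt8 {Ω : Type*} [MeasureSpace Ω] [IsProbabilityMeasure (ℙ : Measure Ω)]
    {n : ℕ} (hn : 0 < n) (z : Fin n → Ω → ℝ) (p : ℝ) (hp0 : 0 < p) (hp1 : p < 1)
    (hmeas : ∀ i, Measurable (z i))
    (hindep : iIndepFun z ℙ)
    (hval : ∀ i ω, z i ω = 0 ∨ z i ω = 1)
    (hbern : ∀ i, (ℙ {ω | z i ω = 1}).toReal = p)
    (N M : Fin n → Finset (Fin n)) (hNM : ∀ i, N i ⊆ M i)
    (c : Fin n → ℝ) (cc : Fin n → Fin n → ℝ)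
    (Y : Fin n → Ω → ℝ)
    (hY : ∀ i ω, Y i ω =
      c i + ∑ j ∈ N i, cc i j * (if z j ω = 1 then (1 : ℝ) else 0)) :
    (∫ ω, (1 / (n : ℝ)) * ∑ i, Y i ω *
        (∑ j ∈ M i, (z j ω / p - (1 - z j ω) / (1 - p))) ∂ℙ)
      = (1 / (n : ℝ)) * ∑ i, ∑ j ∈ N i, cc i j := by
  have hp1' : (0:ℝ) < 1 - p := by linarith
  -- basic facts
  have hsq : ∀ j ω, z j ω * z j ω = z j ω := by
    intro j ω; rcases hval j ω with h | h <;> simp [h]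
  have hind : ∀ j ω, (if z j ω = 1 then (1:ℝ) else 0) = z j ω := by
    intro j ω; rcases hval j ω with h | h <;> simp [h]
  have hzint : ∀ j, Integrable (z j) ℙ := by
    intro j
    refine (integrable_const (1:ℝ)).mono' (hmeas j).aestronglyMeasurable ?_
    filter_upwards with ω
    rcases hval j ω with h | h <;> simp [h]
  have hEz : ∀ j, ∫ ω, z j ω = p := by
    intro j
    have h1 : ∀ ω, z j ω = Set.indicator {ω | z j ω = 1} (fun _ => (1:ℝ)) ω := by
      intro ω
      rcases hval j ω with h | h <;> simp [Set.indicator, h]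
    have hms : MeasurableSet {ω | z j ω = 1} := (hmeas j) (measurableSet_singleton 1)
    rw [show (fun ω => z j ω) = Set.indicator {ω | z j ω = 1} (fun _ => (1:ℝ)) from funext h1,
      integral_indicator hms]
    simp [measureReal_def, hbern j]
  have hzzint : ∀ j k, Integrable (fun ω => z j ω * z k ω) ℙ := by
    intro j k
    refine (integrable_const (1:ℝ)).mono'
      ((hmeas j).mul (hmeas k)).aestronglyMeasurable ?_
    filter_upwards with ω
    rcases hval j ω with h | h <;> rcases hval k ω with h' | h' <;> simp [h, h']
  have hEzz : ∀ j k, ∫ ω, z j ω * z k ω = if j = k then p else p * p := by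
    intro j k
    by_cases hjk : j = k
    · subst hjk; simp only [hsq, if_true, hEz j]
    · rw [if_neg hjk]
      have hi : IndepFun (z j) (z k) ℙ := hindep.indepFun hjk
      have h2 := hi.integral_mul_eq_mul_integral (hmeas j).aestronglyMeasurable (hmeas k).aestronglyMeasurable
      simpa [hEz] using h2
  -- W
  set W : Fin n → Ω → ℝ := fun k ω => z k ω / p - (1 - z k ω) / (1 - p) with hWdef
  have hWeq : ∀ k ω, W k ω = (1/p + 1/(1-p)) * z k ω - 1/(1-p) := by
    intro k ω; rw [hWdef]; field_simp; ring
  have hWint : ∀ k, Integrable (W k) ℙ := by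
    intro k
    have : W k = fun ω => (1/p + 1/(1-p)) * z k ω - 1/(1-p) := funext (hWeq k)
    rw [this]
    exact ((hzint k).const_mul _).sub (integrable_const _)
  have hEW : ∀ k, ∫ ω, W k ω = 0 := by
    intro k
    simp only [hWeq]
    rw [integral_sub ((hzint k).const_mul _) (integrable_const _),
      integral_const_mul, hEz, integral_const]
    simp only [probReal_univ, measure_univ, ENNReal.toReal_one, smul_eq_mul, one_mul]
    field_simp; ring
  have hzWint : ∀ j k, Integrable (fun ω => z j ω * W k ω) ℙ := by
    intro j k
    simp only [hWeq]
    have : (fun ω => z j ω * ((1/p + 1/(1-p)) * z k ω - 1/(1-p)))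
        = fun ω => (1/p + 1/(1-p)) * (z j ω * z k ω) - (1/(1-p)) * z j ω := by
      funext ω; ring
    rw [this]
    exact (((hzzint j k).const_mul _)).sub ((hzint j).const_mul _)
  have hEzW : ∀ j k, ∫ ω, z j ω * W k ω = if j = k then 1 else 0 := by
    intro j k
    simp only [hWeq]
    have : (fun ω => z j ω * ((1/p + 1/(1-p)) * z k ω - 1/(1-p)))
        = fun ω => (1/p + 1/(1-p)) * (z j ω * z k ω) - (1/(1-p)) * z j ω := by
      funext ω; ring
    rw [this, integral_sub (((hzzint j k).const_mul _)) ((hzint j).const_mul _),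
      integral_const_mul, integral_const_mul, hEzz, hEz]
    by_cases hjk : j = k
    · rw [if_pos hjk, if_pos hjk]; field_simp; ring
    · rw [if_neg hjk, if_neg hjk]; field_simp; ring
  -- rewrite the integrand
  have hYW : ∀ i ω, Y i ω * (∑ k ∈ M i, W k ω)
      = c i * ∑ k ∈ M i, W k ω + ∑ j ∈ N i, ∑ k ∈ M i, cc i j * (z j ω * W k ω) := by
    intro i ω
    rw [hY i ω]
    simp only [hind]
    rw [add_mul, Finset.sum_mul]
    congr 1
    refine Finset.sum_congr rfl fun j _ => ?_
    rw [Finset.mul_sum]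
    exact Finset.sum_congr rfl fun k _ => by ring
  have hint_i : ∀ i, Integrable (fun ω => Y i ω * (∑ k ∈ M i, W k ω)) ℙ := by
    intro i
    have : (fun ω => Y i ω * (∑ k ∈ M i, W k ω))
        = fun ω => c i * ∑ k ∈ M i, W k ω
            + ∑ j ∈ N i, ∑ k ∈ M i, cc i j * (z j ω * W k ω) := funext (hYW i)
    rw [this]
    refine Integrable.add ?_ ?_
    · exact ((integrable_finset_sum _ fun k _ => hWint k).const_mul _)
    · exact integrable_finset_sum _ fun j _ =>
        integrable_finset_sum _ fun k _ => (hzWint j k).const_mul _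
  have hEi : ∀ i, ∫ ω, Y i ω * (∑ k ∈ M i, W k ω) = ∑ j ∈ N i, cc i j := by
    intro i
    have : (fun ω => Y i ω * (∑ k ∈ M i, W k ω))
        = fun ω => c i * ∑ k ∈ M i, W k ω
            + ∑ j ∈ N i, ∑ k ∈ M i, cc i j * (z j ω * W k ω) := funext (hYW i)
    rw [this, integral_add ((integrable_finset_sum _ fun k _ => hWint k).const_mul _)
        (integrable_finset_sum _ fun j _ =>
          integrable_finset_sum _ fun k _ => (hzWint j k).const_mul _),
      integral_const_mul, integral_finset_sum _ fun k _ => hWint k]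
    simp only [hEW, Finset.sum_const_zero, mul_zero, zero_add]
    rw [integral_finset_sum _ fun j _ =>
        integrable_finset_sum _ fun k _ => (hzWint j k).const_mul _]
    refine Finset.sum_congr rfl fun j hj => ?_
    rw [integral_finset_sum _ fun k _ => (hzWint j k).const_mul _]
    have : ∀ k ∈ M i, ∫ ω, cc i j * (z j ω * W k ω) = if j = k then cc i j else 0 := by
      intro k _
      rw [integral_const_mul, hEzW]
      by_cases h : j = k <;> simp [h]
    rw [Finset.sum_congr rfl this, Finset.sum_ite_eq (M i) j (fun _ => cc i j),
      if_pos (hNM i hj)]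
  calc (∫ ω, (1 / (n : ℝ)) * ∑ i, Y i ω * (∑ k ∈ M i, W k ω) ∂ℙ)
      = (1 / (n : ℝ)) * ∫ ω, ∑ i, Y i ω * (∑ k ∈ M i, W k ω) ∂ℙ := by
        rw [integral_const_mul]
    _ = (1 / (n : ℝ)) * ∑ i, ∫ ω, Y i ω * (∑ k ∈ M i, W k ω) ∂ℙ := by
        rw [integral_finset_sum _ fun i _ => hint_i i]
    _ = (1 / (n : ℝ)) * ∑ i, ∑ j ∈ N i, cc i j := by
        simp only [hEi]
end

section
/- Consider n units with true neighborhoods N_i and supersets M_i ⊇ N_i. Suppose outcomes follow the motif model Y_i(z) = c_i + Σ_{S'⊆N_i, |S'|≤β} c_{i,S'} ∏_{j∈S'} 1[z_j = 1], with z_1,...,z_n mutually independent Bernoulli(p), 0 < p < 1. Then the estimator τ̂^β = (1/n) Σ_i Y_i(z) Σ_{S⊆M_i, |S|≤β} ( ∏_{j∈S}(z_j−p)/p − ∏_{j∈S}(p−z_j)/(1−p) ) satisfies E[τ̂^β] = (1/n) Σ_i Σ_{S'⊆N_i, |S'|≤β} c_{i,S'} = τ(1⃗, 0⃗). -/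
open MeasureTheory ProbabilityTheory Finset

set_option linter.unusedSectionVars false

section Aux

variable {Ω : Type*} [MeasureSpace Ω] [IsProbabilityMeasure (ℙ : Measure Ω)]
  {n : ℕ} {z : Fin n → Ω → ℝ} {p : ℝ}

lemma aux_meas_if (hmeas : ∀ i, Measurable (z i)) (j : Fin n) (a b : ℝ) :
    Measurable (fun ω => if z j ω = 1 then a else b) := by
  have h : MeasurableSet {ω | z j ω = 1} := hmeas j (measurableSet_singleton 1)
  exact Measurable.ite h measurable_const measurable_const

lemma aux_int_if (hmeas : ∀ i, Measurable (z i)) (hbern : ∀ i, (ℙ {ω | z i ω = 1}).toReal = p)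
    (j : Fin n) (a b : ℝ) :
    ∫ ω, (if z j ω = 1 then a else b) ∂ℙ = a * p + b * (1 - p) := by
  have hA : MeasurableSet {ω | z j ω = 1} := hmeas j (measurableSet_singleton 1)
  have heq : (fun ω => if z j ω = 1 then a else b)
      = fun ω => Set.indicator {ω | z j ω = 1} (fun _ => a - b) ω + b := by
    funext ω
    by_cases h : z j ω = 1
    · simp [h, Set.indicator_of_mem (show ω ∈ {ω | z j ω = 1} from h)]
    · simp [h, Set.indicator_of_notMem (show ω ∉ {ω | z j ω = 1} from h)]
  rw [heq, integral_add ((integrable_const (a - b)).indicator hA) (integrable_const b),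
    integral_indicator_const _ hA, integral_const]
  simp [measureReal_def, hbern j]
  ring

lemma aux_intble_prod (hmeas : ∀ i, Measurable (z i)) (s : Finset (Fin n)) (A B : Fin n → ℝ) :
    Integrable (fun ω => ∏ j ∈ s, (if z j ω = 1 then A j else B j)) ℙ := by
  have hmeasP : Measurable (fun ω => ∏ j ∈ s, (if z j ω = 1 then A j else B j)) :=
    Finset.measurable_prod s (fun j _ => aux_meas_if hmeas j (A j) (B j))
  refine (integrable_const (∏ j ∈ s, (|A j| + |B j|))).mono' hmeasP.aestronglyMeasurable ?_
  filter_upwards with ω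
  rw [Real.norm_eq_abs, Finset.abs_prod]
  refine Finset.prod_le_prod (fun j _ => abs_nonneg _) fun j _ => ?_
  by_cases h : z j ω = 1
  · rw [if_pos h]
    exact le_add_of_nonneg_right (abs_nonneg _)
  · rw [if_neg h]
    exact le_add_of_nonneg_left (abs_nonneg _)

lemma aux_int_prod (hmeas : ∀ i, Measurable (z i))
    (hindep : iIndepFun z ℙ)
    (hbern : ∀ i, (ℙ {ω | z i ω = 1}).toReal = p)
    (s : Finset (Fin n)) (A B : Fin n → ℝ) :
    ∫ ω, ∏ j ∈ s, (if z j ω = 1 then A j else B j) ∂ℙ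
      = ∏ j ∈ s, (A j * p + B j * (1 - p)) := by
  classical
  induction s using Finset.induction_on with
  | empty => simp
  | @insert i s hi ih =>
    have hF : iIndepFun
        (fun j => fun ω => if z j ω = 1 then A j else B j) ℙ := by
      have := hindep.comp (fun j => fun x : ℝ => if x = 1 then A j else B j)
        (fun j => Measurable.ite (measurableSet_singleton 1) measurable_const measurable_const)
      exact this
    have hIndep2 : IndepFun (∏ j ∈ s, (fun ω => if z j ω = 1 then A j else B j))
        (fun ω => if z i ω = 1 then A i else B i) ℙ :=
      hF.indepFun_finsetProd_of_notMem
        (fun j => aux_meas_if hmeas j (A j) (B j)) hi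
    have hprodfn : (∏ j ∈ s, (fun ω => if z j ω = 1 then A j else B j))
        = fun ω => ∏ j ∈ s, (if z j ω = 1 then A j else B j) := by
      funext ω; simp
    simp only [Finset.prod_insert hi]
    rw [← ih, ← aux_int_if hmeas hbern i (A i) (B i)]
    have := hIndep2.symm.integral_mul_eq_mul_integral
      ((integrable_const (max |A i| |B i|)).mono'
        (aux_meas_if hmeas i (A i) (B i)).aestronglyMeasurable
        (by filter_upwards with ω; by_cases h : z i ω = 1 <;>
          simp [h, Real.norm_eq_abs, le_max_left, le_max_right, abs_le, le_abs_self])).aestronglyMeasurable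
      (show Integrable (∏ j ∈ s, (fun ω => if z j ω = 1 then A j else B j)) ℙ by rw [hprodfn]; exact aux_intble_prod hmeas s A B).aestronglyMeasurable
    rw [hprodfn] at this
    calc ∫ ω, (if z i ω = 1 then A i else B i) * ∏ j ∈ s, (if z j ω = 1 then A j else B j) ∂ℙ
        = ∫ ω, ((fun ω => if z i ω = 1 then A i else B i) *
            (fun ω => ∏ j ∈ s, (if z j ω = 1 then A j else B j))) ω ∂ℙ := rfl
      _ = _ := by rw [this]

lemma aux_pt1 (hp0 : p ≠ 0) (hval : ∀ i ω, z i ω = 0 ∨ z i ω = 1) (ω : Ω)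
    (S' S : Finset (Fin n)) :
    (∏ j ∈ S', (if z j ω = 1 then (1:ℝ) else 0)) * ∏ j ∈ S, ((z j ω - p)/p)
      = ∏ j, (if z j ω = 1 then (if j ∈ S then (1-p)/p else 1)
          else ((if j ∈ S' then (0:ℝ) else 1) * (if j ∈ S then -1 else 1))) := by
  classical
  rw [show (∏ j ∈ S', (if z j ω = 1 then (1:ℝ) else 0))
      = ∏ j, (if j ∈ S' then (if z j ω = 1 then (1:ℝ) else 0) else 1) by
        rw [Finset.prod_ite_mem Finset.univ S', Finset.univ_inter],
    show (∏ j ∈ S, ((z j ω - p)/p)) = ∏ j, (if j ∈ S then (z j ω - p)/p else 1) by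
        rw [Finset.prod_ite_mem Finset.univ S, Finset.univ_inter],
    ← Finset.prod_mul_distrib]
  refine Finset.prod_congr rfl fun j _ => ?_
  rcases hval j ω with h | h <;>
    by_cases hj1 : j ∈ S' <;> by_cases hj2 : j ∈ S <;>
      simp [h, hj1, hj2] <;> field_simp

lemma aux_pt2 (hp1 : (1:ℝ) - p ≠ 0) (hval : ∀ i ω, z i ω = 0 ∨ z i ω = 1) (ω : Ω)
    (S' S : Finset (Fin n)) :
    (∏ j ∈ S', (if z j ω = 1 then (1:ℝ) else 0)) * ∏ j ∈ S, ((p - z j ω)/(1-p))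
      = ∏ j, (if z j ω = 1 then (if j ∈ S then (-1:ℝ) else 1)
          else ((if j ∈ S' then (0:ℝ) else 1) * (if j ∈ S then p/(1-p) else 1))) := by
  classical
  rw [show (∏ j ∈ S', (if z j ω = 1 then (1:ℝ) else 0))
      = ∏ j, (if j ∈ S' then (if z j ω = 1 then (1:ℝ) else 0) else 1) by
        rw [Finset.prod_ite_mem Finset.univ S', Finset.univ_inter],
    show (∏ j ∈ S, ((p - z j ω)/(1-p))) = ∏ j, (if j ∈ S then (p - z j ω)/(1-p) else 1) by
        rw [Finset.prod_ite_mem Finset.univ S, Finset.univ_inter],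
    ← Finset.prod_mul_distrib]
  refine Finset.prod_congr rfl fun j _ => ?_
  rcases hval j ω with h | h <;>
    by_cases hj1 : j ∈ S' <;> by_cases hj2 : j ∈ S <;>
      simp [h, hj1, hj2] <;> field_simp <;> ring

end Aux

lemma aux_alg {α : Type*} [Fintype α] [DecidableEq α] (p : ℝ) (hp0 : p ≠ 0)
    (hp1 : (1:ℝ) - p ≠ 0)
    (β : ℕ) (Mi : Finset α) (S' : Finset α) (hS'M : S' ⊆ Mi) (hS'β : S'.card ≤ β) :
    ∑ S ∈ Mi.powerset.filter (fun S => S.card ≤ β),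
      ((∏ j : α, ((if j ∈ S then (1-p)/p else 1) * p
          + ((if j ∈ S' then (0:ℝ) else 1) * (if j ∈ S then -1 else 1)) * (1-p)))
       - ∏ j : α, ((if j ∈ S then (-1:ℝ) else 1) * p
          + ((if j ∈ S' then (0:ℝ) else 1) * (if j ∈ S then p/(1-p) else 1)) * (1-p)))
      = if S'.Nonempty then 1 else 0 := by
  classical
  have hsub : S'.powerset ⊆ Mi.powerset.filter (fun S => S.card ≤ β) := by
    intro S hS
    rw [Finset.mem_powerset] at hS
    rw [Finset.mem_filter, Finset.mem_powerset]
    exact ⟨hS.trans hS'M, (Finset.card_le_card hS).trans hS'β⟩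
  have hvan : ∀ S ∈ Mi.powerset.filter (fun S => S.card ≤ β), S ∉ S'.powerset →
      ((∏ j : α, ((if j ∈ S then (1-p)/p else 1) * p
          + ((if j ∈ S' then (0:ℝ) else 1) * (if j ∈ S then -1 else 1)) * (1-p)))
       - ∏ j : α, ((if j ∈ S then (-1:ℝ) else 1) * p
          + ((if j ∈ S' then (0:ℝ) else 1) * (if j ∈ S then p/(1-p) else 1)) * (1-p))) = 0 := by
    intro S _ hS
    rw [Finset.mem_powerset] at hS
    obtain ⟨j, hjS, hjS'⟩ := Finset.not_subset.mp hS
    have h1 : ((if j ∈ S then (1-p)/p else 1) * p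
        + ((if j ∈ S' then (0:ℝ) else 1) * (if j ∈ S then -1 else 1)) * (1-p)) = 0 := by
      rw [if_pos hjS, if_pos hjS, if_neg hjS']
      field_simp
      ring
    have h2 : ((if j ∈ S then (-1:ℝ) else 1) * p
        + ((if j ∈ S' then (0:ℝ) else 1) * (if j ∈ S then p/(1-p) else 1)) * (1-p)) = 0 := by
      rw [if_pos hjS, if_pos hjS, if_neg hjS']
      field_simp
      ring
    rw [Finset.prod_eq_zero (Finset.mem_univ j) h1,
      Finset.prod_eq_zero (Finset.mem_univ j) h2, sub_zero]
  rw [← Finset.sum_subset hsub hvan]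
  have hterm : ∀ S ∈ S'.powerset,
      ((∏ j : α, ((if j ∈ S then (1-p)/p else 1) * p
          + ((if j ∈ S' then (0:ℝ) else 1) * (if j ∈ S then -1 else 1)) * (1-p)))
       - ∏ j : α, ((if j ∈ S then (-1:ℝ) else 1) * p
          + ((if j ∈ S' then (0:ℝ) else 1) * (if j ∈ S then p/(1-p) else 1)) * (1-p)))
      = ((∏ _j ∈ S, (1-p)) * ∏ _j ∈ S' \ S, p) - ((∏ _j ∈ S, (-p)) * ∏ _j ∈ S' \ S, p) := by
    intro S hS
    rw [Finset.mem_powerset] at hS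
    have key1 : (∏ j : α, ((if j ∈ S then (1-p)/p else 1) * p
          + ((if j ∈ S' then (0:ℝ) else 1) * (if j ∈ S then -1 else 1)) * (1-p)))
        = (∏ _j ∈ S, (1-p)) * ∏ _j ∈ S' \ S, p := by
      rw [← Finset.prod_subset (Finset.subset_univ S') ?hout]
      case hout =>
        intro j _ hj
        have hjS : j ∉ S := fun h => hj (hS h)
        rw [if_neg hjS, if_neg hjS, if_neg hj]
        ring
      rw [← Finset.prod_sdiff hS, mul_comm]
      congr 1
      · exact Finset.prod_congr rfl fun j hj => by
          simp only [hj, hS hj, if_true]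
          field_simp
          ring
      · exact Finset.prod_congr rfl fun j hj => by
          rw [Finset.mem_sdiff] at hj
          simp only [hj.1, hj.2, if_true, if_false]
          ring
    have key2 : (∏ j : α, ((if j ∈ S then (-1:ℝ) else 1) * p
          + ((if j ∈ S' then (0:ℝ) else 1) * (if j ∈ S then p/(1-p) else 1)) * (1-p)))
        = (∏ _j ∈ S, (-p)) * ∏ _j ∈ S' \ S, p := by
      rw [← Finset.prod_subset (Finset.subset_univ S') ?hout2]
      case hout2 =>
        intro j _ hj
        have hjS : j ∉ S := fun h => hj (hS h)
        rw [if_neg hjS, if_neg hjS, if_neg hj]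
        ring
      rw [← Finset.prod_sdiff hS, mul_comm]
      congr 1
      · exact Finset.prod_congr rfl fun j hj => by
          simp only [hj, hS hj, if_true]
          field_simp
          ring
      · exact Finset.prod_congr rfl fun j hj => by
          rw [Finset.mem_sdiff] at hj
          simp only [hj.1, hj.2, if_true, if_false]
          ring
    rw [key1, key2]
  rw [Finset.sum_congr rfl hterm, Finset.sum_sub_distrib,
    ← Finset.prod_add (fun _ => (1-p)) (fun _ => p) S',
    ← Finset.prod_add (fun _ => (-p)) (fun _ => p) S']
  have h1 : ∏ _j ∈ S', ((1-p) + p) = 1 := by simp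
  have h2 : ∏ _j ∈ S', ((-p) + p) = if S'.Nonempty then 0 else 1 := by
    rcases S'.eq_empty_or_nonempty with h | h
    · simp [h]
    · rw [if_pos h]
      exact Finset.prod_eq_zero h.choose_spec (by ring)
  rw [h1, h2]
  rcases S'.eq_empty_or_nonempty with h | h
  · simp [h]
  · simp [h]


noncomputable def G1fun {Ω : Type*} {n : ℕ} (z : Fin n → Ω → ℝ) (p : ℝ) (S' S : Finset (Fin n)) (ω : Ω) : ℝ :=
  ∏ j, (if z j ω = 1 then (if j ∈ S then (1-p)/p else 1)
    else ((if j ∈ S' then (0:ℝ) else 1) * (if j ∈ S then -1 else 1)))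

noncomputable def G2fun {Ω : Type*} {n : ℕ} (z : Fin n → Ω → ℝ) (p : ℝ) (S' S : Finset (Fin n)) (ω : Ω) : ℝ :=
  ∏ j, (if z j ω = 1 then (if j ∈ S then (-1:ℝ) else 1)
    else ((if j ∈ S' then (0:ℝ) else 1) * (if j ∈ S then p/(1-p) else 1)))

theorem stmt9 {Ω : Type*} [MeasureSpace Ω] [IsProbabilityMeasure (ℙ : Measure Ω)]
    {n : ℕ} (hn : 0 < n) (z : Fin n → Ω → ℝ) (p : ℝ) (hp0 : 0 < p) (hp1 : p < 1)
    (hmeas : ∀ i, Measurable (z i))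
    (hindep : iIndepFun z ℙ)
    (hval : ∀ i ω, z i ω = 0 ∨ z i ω = 1)
    (hbern : ∀ i, (ℙ {ω | z i ω = 1}).toReal = p)
    (β : ℕ) (N M : Fin n → Finset (Fin n)) (hNM : ∀ i, N i ⊆ M i)
    (c : Fin n → ℝ) (cS : Fin n → Finset (Fin n) → ℝ)
    (Y : Fin n → Ω → ℝ)
    (hY : ∀ i ω, Y i ω =
      c i + ∑ S' ∈ (N i).powerset.filter (fun S' => S'.card ≤ β ∧ S'.Nonempty),
        cS i S' * ∏ j ∈ S', (if z j ω = 1 then (1 : ℝ) else 0)) :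
    (∫ ω, (1 / (n : ℝ)) * ∑ i, Y i ω *
        (∑ S ∈ (M i).powerset.filter (fun S => S.card ≤ β),
          ((∏ j ∈ S, (z j ω - p) / p) - ∏ j ∈ S, (p - z j ω) / (1 - p))) ∂ℙ)
      = (1 / (n : ℝ)) * ∑ i,
          ∑ S' ∈ (N i).powerset.filter (fun S' => S'.card ≤ β ∧ S'.Nonempty), cS i S' := by
  classical
  have hp0' : p ≠ 0 := ne_of_gt hp0
  have hp1' : (1:ℝ) - p ≠ 0 := by linarith
  have hG1int : ∀ S' S : Finset (Fin n), Integrable (fun ω => G1fun z p S' S ω) ℙ := by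
    intro S' S
    simp only [G1fun]
    exact aux_intble_prod hmeas Finset.univ _ _
  have hG2int : ∀ S' S : Finset (Fin n), Integrable (fun ω => G2fun z p S' S ω) ℙ := by
    intro S' S
    simp only [G2fun]
    exact aux_intble_prod hmeas Finset.univ _ _
  have hDint : ∀ (i : Fin n) (S' : Finset (Fin n)),
      Integrable (fun ω => ∑ S ∈ (M i).powerset.filter (fun S => S.card ≤ β),
        (G1fun z p S' S ω - G2fun z p S' S ω)) ℙ := fun i S' =>
    integrable_finset_sum _ (fun S _ => (hG1int S' S).sub (hG2int S' S))
  -- key expectation computation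
  have hkey : ∀ (i : Fin n) (S' : Finset (Fin n)), S' ⊆ M i → S'.card ≤ β →
      ∫ ω, ∑ S ∈ (M i).powerset.filter (fun S => S.card ≤ β),
        (G1fun z p S' S ω - G2fun z p S' S ω) ∂ℙ = if S'.Nonempty then 1 else 0 := by
    intro i S' hsub hcard
    have h1 : ∫ ω, ∑ S ∈ (M i).powerset.filter (fun S => S.card ≤ β),
        (G1fun z p S' S ω - G2fun z p S' S ω) ∂ℙ
        = ∑ S ∈ (M i).powerset.filter (fun S => S.card ≤ β),
            ∫ ω, (G1fun z p S' S ω - G2fun z p S' S ω) ∂ℙ :=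
      integral_finset_sum _ (fun S _ => (hG1int S' S).sub (hG2int S' S))
    have h2 : ∀ S ∈ (M i).powerset.filter (fun S => S.card ≤ β),
        ∫ ω, (G1fun z p S' S ω - G2fun z p S' S ω) ∂ℙ
        = ((∏ j : Fin n, ((if j ∈ S then (1-p)/p else 1) * p
            + ((if j ∈ S' then (0:ℝ) else 1) * (if j ∈ S then -1 else 1)) * (1-p)))
          - ∏ j : Fin n, ((if j ∈ S then (-1:ℝ) else 1) * p
            + ((if j ∈ S' then (0:ℝ) else 1) * (if j ∈ S then p/(1-p) else 1)) * (1-p))) := by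
      intro S _
      have e1 : ∫ ω, G1fun z p S' S ω ∂ℙ
          = ∏ j : Fin n, ((if j ∈ S then (1-p)/p else 1) * p
            + ((if j ∈ S' then (0:ℝ) else 1) * (if j ∈ S then -1 else 1)) * (1-p)) :=
        aux_int_prod hmeas hindep hbern Finset.univ _ _
      have e2 : ∫ ω, G2fun z p S' S ω ∂ℙ
          = ∏ j : Fin n, ((if j ∈ S then (-1:ℝ) else 1) * p
            + ((if j ∈ S' then (0:ℝ) else 1) * (if j ∈ S then p/(1-p) else 1)) * (1-p)) :=
        aux_int_prod hmeas hindep hbern Finset.univ _ _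
      rw [integral_sub (hG1int S' S) (hG2int S' S), e1, e2]
    rw [h1, Finset.sum_congr rfl h2]
    exact aux_alg p hp0' hp1' β (M i) S' hsub hcard
  -- pointwise rewrite of the integrand
  have hptY : ∀ ω, (1 / (n : ℝ)) * ∑ i, Y i ω *
        (∑ S ∈ (M i).powerset.filter (fun S => S.card ≤ β),
          ((∏ j ∈ S, (z j ω - p) / p) - ∏ j ∈ S, (p - z j ω) / (1 - p)))
      = (1 / (n : ℝ)) * ∑ i,
          (c i * ∑ S ∈ (M i).powerset.filter (fun S => S.card ≤ β),
              (G1fun z p ∅ S ω - G2fun z p ∅ S ω)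
           + ∑ S' ∈ (N i).powerset.filter (fun S' => S'.card ≤ β ∧ S'.Nonempty),
              cS i S' * ∑ S ∈ (M i).powerset.filter (fun S => S.card ≤ β),
                (G1fun z p S' S ω - G2fun z p S' S ω)) := by
    intro ω
    congr 1
    refine Finset.sum_congr rfl fun i _ => ?_
    rw [hY i ω, add_mul, Finset.sum_mul]
    congr 1
    · congr 1
      refine Finset.sum_congr rfl fun S _ => ?_
      have h1 : (∏ j ∈ S, ((z j ω - p)/p)) = G1fun z p ∅ S ω := by
        have := aux_pt1 hp0' hval ω ∅ S
        rwa [Finset.prod_empty, one_mul] at this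
      have h2 : (∏ j ∈ S, ((p - z j ω)/(1-p))) = G2fun z p ∅ S ω := by
        have := aux_pt2 hp1' hval ω ∅ S
        rwa [Finset.prod_empty, one_mul] at this
      rw [h1, h2]
    · refine Finset.sum_congr rfl fun S' _ => ?_
      rw [mul_assoc]
      congr 1
      rw [Finset.mul_sum]
      refine Finset.sum_congr rfl fun S _ => ?_
      have h1 : (∏ j ∈ S', (if z j ω = 1 then (1:ℝ) else 0)) * ∏ j ∈ S, ((z j ω - p)/p)
          = G1fun z p S' S ω := aux_pt1 hp0' hval ω S' S
      have h2 : (∏ j ∈ S', (if z j ω = 1 then (1:ℝ) else 0)) * ∏ j ∈ S, ((p - z j ω)/(1-p))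
          = G2fun z p S' S ω := aux_pt2 hp1' hval ω S' S
      rw [mul_sub, h1, h2]
  -- integrate
  rw [show (fun ω => (1 / (n : ℝ)) * ∑ i, Y i ω *
        (∑ S ∈ (M i).powerset.filter (fun S => S.card ≤ β),
          ((∏ j ∈ S, (z j ω - p) / p) - ∏ j ∈ S, (p - z j ω) / (1 - p))))
      = (fun ω => (1 / (n : ℝ)) * ∑ i,
          (c i * ∑ S ∈ (M i).powerset.filter (fun S => S.card ≤ β),
              (G1fun z p ∅ S ω - G2fun z p ∅ S ω)
           + ∑ S' ∈ (N i).powerset.filter (fun S' => S'.card ≤ β ∧ S'.Nonempty),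
              cS i S' * ∑ S ∈ (M i).powerset.filter (fun S => S.card ≤ β),
                (G1fun z p S' S ω - G2fun z p S' S ω))) from funext hptY]
  have hFint : ∀ i : Fin n, Integrable (fun ω =>
      c i * ∑ S ∈ (M i).powerset.filter (fun S => S.card ≤ β),
          (G1fun z p ∅ S ω - G2fun z p ∅ S ω)
       + ∑ S' ∈ (N i).powerset.filter (fun S' => S'.card ≤ β ∧ S'.Nonempty),
          cS i S' * ∑ S ∈ (M i).powerset.filter (fun S => S.card ≤ β),
            (G1fun z p S' S ω - G2fun z p S' S ω)) ℙ := fun i =>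
    ((hDint i ∅).const_mul _).add
      (integrable_finset_sum _ (fun S' _ => (hDint i S').const_mul _))
  have step1 : (∫ ω, (1 / (n : ℝ)) * ∑ i,
          (c i * ∑ S ∈ (M i).powerset.filter (fun S => S.card ≤ β),
              (G1fun z p ∅ S ω - G2fun z p ∅ S ω)
           + ∑ S' ∈ (N i).powerset.filter (fun S' => S'.card ≤ β ∧ S'.Nonempty),
              cS i S' * ∑ S ∈ (M i).powerset.filter (fun S => S.card ≤ β),
                (G1fun z p S' S ω - G2fun z p S' S ω)) ∂ℙ)
      = (1 / (n : ℝ)) * ∫ ω, ∑ i,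
          (c i * ∑ S ∈ (M i).powerset.filter (fun S => S.card ≤ β),
              (G1fun z p ∅ S ω - G2fun z p ∅ S ω)
           + ∑ S' ∈ (N i).powerset.filter (fun S' => S'.card ≤ β ∧ S'.Nonempty),
              cS i S' * ∑ S ∈ (M i).powerset.filter (fun S => S.card ≤ β),
                (G1fun z p S' S ω - G2fun z p S' S ω)) ∂ℙ :=
    integral_const_mul _ _
  have step2 : (∫ ω, ∑ i,
          (c i * ∑ S ∈ (M i).powerset.filter (fun S => S.card ≤ β),
              (G1fun z p ∅ S ω - G2fun z p ∅ S ω)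
           + ∑ S' ∈ (N i).powerset.filter (fun S' => S'.card ≤ β ∧ S'.Nonempty),
              cS i S' * ∑ S ∈ (M i).powerset.filter (fun S => S.card ≤ β),
                (G1fun z p S' S ω - G2fun z p S' S ω)) ∂ℙ)
      = ∑ i, ∫ ω,
          (c i * ∑ S ∈ (M i).powerset.filter (fun S => S.card ≤ β),
              (G1fun z p ∅ S ω - G2fun z p ∅ S ω)
           + ∑ S' ∈ (N i).powerset.filter (fun S' => S'.card ≤ β ∧ S'.Nonempty),
              cS i S' * ∑ S ∈ (M i).powerset.filter (fun S => S.card ≤ β),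
                (G1fun z p S' S ω - G2fun z p S' S ω)) ∂ℙ :=
    integral_finset_sum _ (fun i _ => hFint i)
  have step3 : ∀ i : Fin n, (∫ ω,
          (c i * ∑ S ∈ (M i).powerset.filter (fun S => S.card ≤ β),
              (G1fun z p ∅ S ω - G2fun z p ∅ S ω)
           + ∑ S' ∈ (N i).powerset.filter (fun S' => S'.card ≤ β ∧ S'.Nonempty),
              cS i S' * ∑ S ∈ (M i).powerset.filter (fun S => S.card ≤ β),
                (G1fun z p S' S ω - G2fun z p S' S ω)) ∂ℙ)
      = ∑ S' ∈ (N i).powerset.filter (fun S' => S'.card ≤ β ∧ S'.Nonempty), cS i S' := by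
    intro i
    have a1 : (∫ ω,
          (c i * ∑ S ∈ (M i).powerset.filter (fun S => S.card ≤ β),
              (G1fun z p ∅ S ω - G2fun z p ∅ S ω)
           + ∑ S' ∈ (N i).powerset.filter (fun S' => S'.card ≤ β ∧ S'.Nonempty),
              cS i S' * ∑ S ∈ (M i).powerset.filter (fun S => S.card ≤ β),
                (G1fun z p S' S ω - G2fun z p S' S ω)) ∂ℙ)
        = (∫ ω, c i * ∑ S ∈ (M i).powerset.filter (fun S => S.card ≤ β),
              (G1fun z p ∅ S ω - G2fun z p ∅ S ω) ∂ℙ)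
          + ∫ ω, ∑ S' ∈ (N i).powerset.filter (fun S' => S'.card ≤ β ∧ S'.Nonempty),
              cS i S' * ∑ S ∈ (M i).powerset.filter (fun S => S.card ≤ β),
                (G1fun z p S' S ω - G2fun z p S' S ω) ∂ℙ :=
      integral_add ((hDint i ∅).const_mul _)
        (integrable_finset_sum _ (fun S' _ => (hDint i S').const_mul _))
    have a2 : (∫ ω, c i * ∑ S ∈ (M i).powerset.filter (fun S => S.card ≤ β),
              (G1fun z p ∅ S ω - G2fun z p ∅ S ω) ∂ℙ)
        = c i * ∫ ω, ∑ S ∈ (M i).powerset.filter (fun S => S.card ≤ β),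
              (G1fun z p ∅ S ω - G2fun z p ∅ S ω) ∂ℙ := integral_const_mul _ _
    have a3 : (∫ ω, ∑ S' ∈ (N i).powerset.filter (fun S' => S'.card ≤ β ∧ S'.Nonempty),
              cS i S' * ∑ S ∈ (M i).powerset.filter (fun S => S.card ≤ β),
                (G1fun z p S' S ω - G2fun z p S' S ω) ∂ℙ)
        = ∑ S' ∈ (N i).powerset.filter (fun S' => S'.card ≤ β ∧ S'.Nonempty),
            ∫ ω, cS i S' * ∑ S ∈ (M i).powerset.filter (fun S => S.card ≤ β),
                (G1fun z p S' S ω - G2fun z p S' S ω) ∂ℙ :=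
      integral_finset_sum _ (fun S' _ => (hDint i S').const_mul _)
    have a4 : ∀ S' ∈ (N i).powerset.filter (fun S' => S'.card ≤ β ∧ S'.Nonempty),
        (∫ ω, cS i S' * ∑ S ∈ (M i).powerset.filter (fun S => S.card ≤ β),
              (G1fun z p S' S ω - G2fun z p S' S ω) ∂ℙ) = cS i S' := by
      intro S' hS'
      rw [Finset.mem_filter, Finset.mem_powerset] at hS'
      have b1 : (∫ ω, cS i S' * ∑ S ∈ (M i).powerset.filter (fun S => S.card ≤ β),
              (G1fun z p S' S ω - G2fun z p S' S ω) ∂ℙ)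
          = cS i S' * ∫ ω, ∑ S ∈ (M i).powerset.filter (fun S => S.card ≤ β),
              (G1fun z p S' S ω - G2fun z p S' S ω) ∂ℙ := integral_const_mul _ _
      rw [b1, hkey i S' (hS'.1.trans (hNM i)) hS'.2.1, if_pos hS'.2.2, mul_one]
    have a5 : (∫ ω, ∑ S ∈ (M i).powerset.filter (fun S => S.card ≤ β),
              (G1fun z p ∅ S ω - G2fun z p ∅ S ω) ∂ℙ) = 0 := by
      rw [hkey i ∅ (Finset.empty_subset _) (by simp)]
      simp
    rw [a1, a2, a5, a3, Finset.sum_congr rfl a4, mul_zero, zero_add]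
  rw [step1, step2, Finset.sum_congr rfl (fun i _ => step3 i)]
end
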